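/- Let Γ be a non-amenable finitely generated group with word metric d, μ a probability measure whose support generates Γ as a semigroup, (Zₙ) the corresponding random walk, A ⊆ Γ, and D_A = inf{n ≥ 0 : Zₙ ∉ A}. If P_x[D_A = ∞] > 0 and the random walk conditioned on {D_A = ∞} is transient in the sense that it visits each element of Γ only finitely often almost surely, then P_x[lim_{n→∞} d(Zₙ, A^c) = ∞ | D_A = ∞] = 1. -/

import Mathlib

open MeasureTheory ProbabilityTheory Filter
open scoped ENNReal

set_option linter.unusedSectionVars false

namespace Stmt19Aux

lemma measAll {α : Type*} [MeasurableSpace α] [Countable α] [MeasurableSingletonClass α]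
    (s : Set α) : MeasurableSet s := s.to_countable.measurableSet

/-- probability that a word is spelled -/
noncomputable def pL {Γ : Type*} [MeasurableSpace Γ] [One Γ] (μ : Measure Γ) (w : List Γ) :
    ℝ≥0∞ := ∏ i ∈ Finset.range w.length, μ {w.getD i 1}

section

variable {Ω Γ : Type*} [MeasureSpace Ω] [Group Γ] [MeasurableSpace Γ]
  [MeasurableSingletonClass Γ] [Countable Γ]

/-- the word `w` is spelled by the increments starting at time `k` -/
def Succ (X : ℕ → Ω → Γ) (k : ℕ) (w : List Γ) (ω : Ω) : Prop :=
  ∀ i < w.length, X (k + i) ω = w.getD i 1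

/-- `Tau N K Z j ω n` means the `j`-th (`K`-separated, greedy) time that `Z` is in `N` is `n`. -/
def Tau (N : Set Γ) (K : ℕ) (Z : ℕ → Ω → Γ) : ℕ → Ω → ℕ → Prop
  | 0, ω, n => Z n ω ∈ N ∧ ∀ k < n, Z k ω ∉ N
  | (j+1), ω, n => ∃ m, Tau N K Z j ω m ∧ m + K ≤ n ∧ Z n ω ∈ N ∧
      ∀ k, m + K ≤ k → k < n → Z k ω ∉ N

variable {N : Set Γ} {K : ℕ} {X Z : ℕ → Ω → Γ} {x : Γ}

lemma tau_unique : ∀ (j : ℕ) {ω n n'}, Tau N K Z j ω n → Tau N K Z j ω n' → n = n' := by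
  intro j
  induction j with
  | zero =>
    intro ω n n' h h'
    rcases Nat.lt_trichotomy n n' with hlt | he | hlt
    · exact absurd h.1 (h'.2 n hlt)
    · exact he
    · exact absurd h'.1 (h.2 n' hlt)
  | succ j ih =>
    rintro ω n n' ⟨m, hm, hmK, hN, hmin⟩ ⟨m', hm', hmK', hN', hmin'⟩
    have : m = m' := ih hm hm'
    subst this
    rcases Nat.lt_trichotomy n n' with hlt | he | hlt
    · exact absurd hN (hmin' n hmK hlt)
    · exact he
    · exact absurd hN' (hmin n' hmK' hlt)

lemma tau_exists (ω : Ω) (hfreq : ∃ᶠ n in atTop, Z n ω ∈ N) (j : ℕ) :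
    ∃ n, Tau N K Z j ω n := by
  induction j with
  | zero =>
    have hne : {n | Z n ω ∈ N}.Nonempty := by
      rcases (frequently_atTop.1 hfreq 0) with ⟨n, _, hn⟩; exact ⟨n, hn⟩
    refine ⟨sInf {n | Z n ω ∈ N}, Nat.sInf_mem hne, fun k hk => Nat.notMem_of_lt_sInf hk⟩
  | succ j ih =>
    rcases ih with ⟨m, hm⟩
    have hne : {n | m + K ≤ n ∧ Z n ω ∈ N}.Nonempty := by
      rcases (frequently_atTop.1 hfreq (m + K)) with ⟨n, hn1, hn2⟩; exact ⟨n, hn1, hn2⟩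
    refine ⟨sInf _, m, hm, (Nat.sInf_mem hne).1, (Nat.sInf_mem hne).2, fun k hk1 hk2 => ?_⟩
    intro hkN
    exact Nat.notMem_of_lt_sInf hk2 ⟨hk1, hkN⟩

lemma tau_prev_succ : ∀ (j : ℕ) {i ω n}, Tau N K Z (j+1) ω n → i ≤ j →
    ∃ k, Tau N K Z i ω k ∧ k + K ≤ n := by
  intro j
  induction j with
  | zero =>
    rintro i ω n ⟨m, hm, hmK, -⟩ hi
    interval_cases i
    exact ⟨m, hm, hmK⟩
  | succ j ih =>
    rintro i ω n ⟨m, hm, hmK, -⟩ hi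
    rcases Nat.lt_or_ge i (j+1) with h | h
    · rcases ih hm (Nat.lt_succ_iff.mp h) with ⟨k, hk, hkK⟩
      exact ⟨k, hk, le_trans (le_trans hkK (Nat.le_add_right m K)) hmK⟩
    · have : i = j + 1 := le_antisymm hi h
      subst this
      exact ⟨m, hm, hmK⟩

lemma tau_mem (j : ℕ) {ω n} (h : Tau N K Z j ω n) : Z n ω ∈ N := by
  cases j with
  | zero => simp only [Tau] at h; exact h.1
  | succ j => simp only [Tau] at h; exact h.choose_spec.2.2.1

lemma tau_congr : ∀ (j : ℕ) {ω ω' n}, (∀ l ≤ n, Z l ω = Z l ω') →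
    Tau N K Z j ω n → Tau N K Z j ω' n := by
  intro j
  induction j with
  | zero =>
    intro ω ω' n hagree h
    exact ⟨(hagree n le_rfl) ▸ h.1, fun k hk => (hagree k hk.le) ▸ h.2 k hk⟩
  | succ j ih =>
    rintro ω ω' n hagree ⟨m, hm, hmK, hN, hmin⟩
    refine ⟨m, ih (fun l hl => hagree l (le_trans hl (le_trans (Nat.le_add_right m K) hmK))) hm,
      hmK, (hagree n le_rfl) ▸ hN, fun k hk1 hk2 => (hagree k hk2.le) ▸ hmin k hk1 hk2⟩

lemma z_meas (hmeas : ∀ i, Measurable (X i)) (hZ0 : ∀ ω, Z 0 ω = x)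
    (hZs : ∀ n ω, Z (n + 1) ω = Z n ω * X n ω) (n : ℕ) : Measurable (Z n) := by
  induction n with
  | zero =>
    have : Z 0 = fun _ => x := funext hZ0
    rw [this]; exact measurable_const
  | succ n ih =>
    apply measurable_to_countable'
    intro z
    have : Z (n+1) ⁻¹' {z} = ⋃ a : Γ, (Z n ⁻¹' {a} ∩ X n ⁻¹' {a⁻¹ * z}) := by
      ext ω
      simp only [Set.mem_preimage, Set.mem_singleton_iff, Set.mem_iUnion, Set.mem_inter_iff,
        hZs n ω]
      constructor
      · rintro rfl; exact ⟨Z n ω, rfl, by group⟩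
      · rintro ⟨a, h1, h2⟩; rw [h1, h2]; group
    rw [this]
    exact MeasurableSet.iUnion fun a =>
      (ih (measurableSet_singleton a)).inter ((hmeas n) (measurableSet_singleton _))

lemma z_shift (hZs : ∀ n ω, Z (n + 1) ω = Z n ω * X n ω) :
    ∀ (t k : ℕ) (ω : Ω), Z (k + t) ω = Z k ω * ((List.range t).map (fun i => X (k+i) ω)).prod := by
  intro t
  induction t with
  | zero => intro k ω; simp
  | succ t ih =>
    intro k ω
    have : k + (t + 1) = (k + t) + 1 := by omega
    rw [this, hZs, ih, List.range_succ, List.map_append, List.prod_append]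
    simp [mul_assoc]

lemma succ_word {k : ℕ} {w : List Γ} {ω : Ω} (hsucc : Succ X k w ω) :
    (List.range w.length).map (fun i => X (k+i) ω) = w := by
  apply List.ext_get (by simp)
  intro i h1 h2
  simp only [List.get_eq_getElem, List.getElem_map, List.getElem_range]
  rw [← List.getD_eq_getElem (l := w) (d := 1) h2]
  exact hsucc i h2

lemma succ_z (hZs : ∀ n ω, Z (n + 1) ω = Z n ω * X n ω) {k : ℕ} {w : List Γ} {ω : Ω}
    (hsucc : Succ X k w ω) : Z (k + w.length) ω = Z k ω * w.prod := by
  rw [z_shift hZs, succ_word hsucc]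

lemma tau_measSet (hZm : ∀ n, Measurable (Z n)) :
    ∀ (j n : ℕ), MeasurableSet {ω | Tau N K Z j ω n} := by
  intro j
  induction j with
  | zero =>
    intro n
    have : {ω | Tau N K Z 0 ω n} = (Z n ⁻¹' N) ∩ ⋂ k, ⋂ (_ : k < n), (Z k ⁻¹' N)ᶜ := by
      ext ω
      simp [Tau, Set.mem_iInter]
    rw [this]
    exact ((hZm n) (measAll N)).inter (MeasurableSet.iInter fun k => MeasurableSet.iInter fun _ =>
      ((hZm k) (measAll N)).compl)
  | succ j ih =>
    intro n
    have : {ω | Tau N K Z (j+1) ω n} = ⋃ m, ⋃ (_ : m + K ≤ n),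
        ({ω | Tau N K Z j ω m} ∩ (Z n ⁻¹' N) ∩
          ⋂ k, ⋂ (_ : m + K ≤ k), ⋂ (_ : k < n), (Z k ⁻¹' N)ᶜ) := by
      ext ω
      simp only [Set.mem_setOf_eq, Set.mem_iUnion, Set.mem_inter_iff, Set.mem_iInter,
        Set.mem_preimage, Set.mem_compl_iff, Tau]
      constructor
      · rintro ⟨m, hm, hmK, hN, hmin⟩
        exact ⟨m, hmK, ⟨hm, hN⟩, fun k hk1 hk2 => hmin k hk1 hk2⟩
      · rintro ⟨m, hmK, ⟨hm, hN⟩, hmin⟩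
        exact ⟨m, hm, hmK, hN, fun k hk1 hk2 => hmin k hk1 hk2⟩
    rw [this]
    exact MeasurableSet.iUnion fun m => MeasurableSet.iUnion fun _ =>
      (((ih m).inter ((hZm n) (measAll N))).inter (MeasurableSet.iInter fun k =>
        MeasurableSet.iInter fun _ => MeasurableSet.iInter fun _ => ((hZm k) (measAll N)).compl))

lemma succ_measSet (hmeas : ∀ i, Measurable (X i)) (k : ℕ) (w : List Γ) :
    MeasurableSet {ω | Succ X k w ω} := by
  have : {ω | Succ X k w ω} = ⋂ i, ⋂ (_ : i < w.length), X (k+i) ⁻¹' {w.getD i 1} := by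
    ext ω; simp [Succ, Set.mem_iInter]
  rw [this]
  exact MeasurableSet.iInter fun i => MeasurableSet.iInter fun _ =>
    (hmeas (k+i)) (measurableSet_singleton _)

variable {μ : Measure Γ}

lemma succ_prob [IsProbabilityMeasure (ℙ : Measure Ω)] (hmeas : ∀ i, Measurable (X i))
    (hindep : iIndepFun X (ℙ : Measure Ω))
    (hlaw : ∀ i, Measure.map (X i) (ℙ : Measure Ω) = μ)
    (k : ℕ) (w : List Γ) : (ℙ : Measure Ω) {ω | Succ X k w ω} = pL μ w := by
  have hset : {ω | Succ X k w ω} =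
      ⋂ i ∈ Finset.Ico k (k + w.length), X i ⁻¹' {w.getD (i - k) 1} := by
    ext ω
    simp only [Set.mem_setOf_eq, Set.mem_iInter, Finset.mem_Ico, Set.mem_preimage,
      Set.mem_singleton_iff, Succ]
    constructor
    · rintro h i ⟨h1, h2⟩
      have := h (i - k) (by omega)
      rwa [Nat.add_sub_cancel' h1] at this
    · intro h i hi
      have := h (k + i) ⟨Nat.le_add_right _ _, by omega⟩
      rwa [Nat.add_sub_self_left] at this
  rw [hset, hindep.measure_inter_preimage_eq_mul (Finset.Ico k (k + w.length))
    (fun i _ => measurableSet_singleton _)]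
  rw [Finset.prod_Ico_eq_prod_range]
  have h1 : k + w.length - k = w.length := by omega
  rw [h1]
  refine Finset.prod_congr rfl fun i _ => ?_
  have h2 : k + i - k = i := by omega
  rw [h2, ← hlaw (k + i), Measure.map_apply (hmeas _) (measurableSet_singleton _)]

lemma indep_past [IsProbabilityMeasure (ℙ : Measure Ω)] (hmeas : ∀ i, Measurable (X i))
    (hindep : iIndepFun X (ℙ : Measure Ω)) (n len : ℕ) (D : Set Ω)
    (hD : ∀ ω ω', (∀ i < n, X i ω = X i ω') → ω ∈ D → ω' ∈ D)
    (S : Set (Fin len → Γ)) :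
    (ℙ : Measure Ω) (D ∩ (fun ω (i : Fin len) => X (n + ↑i) ω) ⁻¹' S) =
      ℙ D * (ℙ : Measure Ω) ((fun ω (i : Fin len) => X (n + ↑i) ω) ⁻¹' S) := by
  set U : Ω → (Fin len → Γ) := fun ω (i : Fin len) => X (n + ↑i) ω with hU
  set V : Ω → (Fin n → Γ) := fun ω (i : Fin n) => X ↑i ω with hV
  have hdisj : Disjoint (Finset.range n) (Finset.Ico n (n + len)) := by
    simp only [Finset.disjoint_left, Finset.mem_range, Finset.mem_Ico]
    omega
  have hbase := hindep.indepFun_finset (Finset.range n) (Finset.Ico n (n + len)) hdisj hmeas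
  have hφ : Measurable (fun (v : { i : ℕ // i ∈ Finset.range n } → Γ) (i : Fin n) =>
      v ⟨↑i, Finset.mem_range.mpr i.isLt⟩) :=
    measurable_pi_lambda _ fun i => measurable_pi_apply _
  have hψ : Measurable (fun (v : { i : ℕ // i ∈ Finset.Ico n (n + len) } → Γ) (i : Fin len) =>
      v ⟨n + ↑i, Finset.mem_Ico.mpr ⟨Nat.le_add_right _ _, by omega⟩⟩) :=
    measurable_pi_lambda _ fun i => measurable_pi_apply _
  have hVU : IndepFun V U (ℙ : Measure Ω) := hbase.comp hφ hψ
  have hDeq : D = V ⁻¹' (V '' D) := by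
    apply Set.Subset.antisymm (Set.subset_preimage_image V D)
    rintro ω ⟨ω', hω', hVeq⟩
    refine hD ω' ω (fun i hi => ?_) hω'
    have := congrFun hVeq ⟨i, hi⟩
    exact this
  rw [hDeq]
  exact hVU.measure_inter_preimage_eq_mul _ _ (measAll _) (measAll _)

theorem key [IsProbabilityMeasure (ℙ : Measure Ω)]
    (hmeas : ∀ i, Measurable (X i))
    (hindep : iIndepFun X (ℙ : Measure Ω))
    (hlaw : ∀ i, Measure.map (X i) (ℙ : Measure Ω) = μ)
    (hZ0 : ∀ ω, Z 0 ω = x) (hZs : ∀ n ω, Z (n + 1) ω = Z n ω * X n ω)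
    (A : Set Γ) (word : Γ → List Γ)
    (hexit : ∀ z ∈ N, z * (word z).prod ∉ A)
    (hK : ∀ z ∈ N, (word z).length + 1 ≤ K)
    (p : ℝ≥0∞) (hp0 : p ≠ 0) (hple : ∀ z ∈ N, p ≤ pL μ (word z)) :
    (ℙ : Measure Ω) ({ω | ∀ n, Z n ω ∈ A} ∩ {ω | ∃ᶠ n in atTop, Z n ω ∈ N}) = 0 := by
  have hZm : ∀ n, Measurable (Z n) := z_meas hmeas hZ0 hZs
  -- the good events
  set C : ℕ → Set Ω := fun j => {ω | (∃ n, Tau N K Z j ω n) ∧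
    ∀ i ≤ j, ∀ k, Tau N K Z i ω k → ¬ Succ X k (word (Z k ω)) ω} with hC
  set Dst : ℕ → ℕ → Γ → Set Ω := fun j n z => {ω | Tau N K Z (j+1) ω n ∧ Z n ω = z ∧
    ∀ i ≤ j, ∀ k, Tau N K Z i ω k → ¬ Succ X k (word (Z k ω)) ω} with hDst
  -- stay ∩ bad ⊆ C j
  have h_subset : ∀ j, {ω | ∀ n, Z n ω ∈ A} ∩ {ω | ∃ᶠ n in atTop, Z n ω ∈ N} ⊆ C j := by
    rintro j ω ⟨hstayω, hbadω⟩
    refine ⟨tau_exists ω hbadω j, ?_⟩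
    intro i _ k htau hsucc
    have hzN := tau_mem i htau
    have hZk := succ_z hZs hsucc
    exact hexit _ hzN (hZk ▸ hstayω (k + (word (Z k ω)).length))
  -- measurability
  have hSuccZ : ∀ k, MeasurableSet {ω | Succ X k (word (Z k ω)) ω} := by
    intro k
    have : {ω | Succ X k (word (Z k ω)) ω} =
        ⋃ z : Γ, (Z k ⁻¹' {z} ∩ {ω | Succ X k (word z) ω}) := by
      ext ω
      simp only [Set.mem_setOf_eq, Set.mem_iUnion, Set.mem_inter_iff, Set.mem_preimage,
        Set.mem_singleton_iff]
      constructor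
      · intro h; exact ⟨Z k ω, rfl, h⟩
      · rintro ⟨z, hz, h⟩; rw [hz]; exact h
    rw [this]
    exact MeasurableSet.iUnion fun z =>
      ((hZm k) (measurableSet_singleton z)).inter (succ_measSet hmeas k (word z))
  have hGoodMeas : ∀ j, MeasurableSet {ω | ∀ i ≤ j, ∀ k, Tau N K Z i ω k →
      ¬ Succ X k (word (Z k ω)) ω} := by
    intro j
    have : {ω | ∀ i ≤ j, ∀ k, Tau N K Z i ω k → ¬ Succ X k (word (Z k ω)) ω} =
        ⋂ i, ⋂ (_ : i ≤ j), ⋂ k, ({ω | Tau N K Z i ω k} ∩ {ω | Succ X k (word (Z k ω)) ω})ᶜ := by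
      ext ω
      simp only [Set.mem_setOf_eq, Set.mem_iInter, Set.mem_compl_iff, Set.mem_inter_iff, not_and]
    rw [this]
    exact MeasurableSet.iInter fun i => MeasurableSet.iInter fun _ => MeasurableSet.iInter fun k =>
      ((tau_measSet hZm i k).inter (hSuccZ k)).compl
  have hCmeas : ∀ j, MeasurableSet (C j) := by
    intro j
    have : C j = (⋃ n, {ω | Tau N K Z j ω n}) ∩
        {ω | ∀ i ≤ j, ∀ k, Tau N K Z i ω k → ¬ Succ X k (word (Z k ω)) ω} := by
      ext ω; simp only [hC, Set.mem_setOf_eq, Set.mem_inter_iff, Set.mem_iUnion]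
    rw [this]
    exact (MeasurableSet.iUnion fun n => tau_measSet hZm j n).inter (hGoodMeas j)
  have hDmeas : ∀ j n z, MeasurableSet (Dst j n z) := by
    intro j n z
    have : Dst j n z = {ω | Tau N K Z (j+1) ω n} ∩ (Z n ⁻¹' {z} ∩
        {ω | ∀ i ≤ j, ∀ k, Tau N K Z i ω k → ¬ Succ X k (word (Z k ω)) ω}) := by
      ext ω
      simp only [hDst, Set.mem_setOf_eq, Set.mem_inter_iff, Set.mem_preimage,
        Set.mem_singleton_iff]
    rw [this]
    exact (tau_measSet hZm (j+1) n).inter (((hZm n) (measurableSet_singleton z)).inter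
      (hGoodMeas j))
  -- Dst invariance under change of future increments
  have hDinv : ∀ j n z ω ω', (∀ i < n, X i ω = X i ω') → ω ∈ Dst j n z → ω' ∈ Dst j n z := by
    rintro j n z ω ω' hagr ⟨htau, hz, hgood⟩
    have hZagr : ∀ l, l ≤ n → Z l ω = Z l ω' := by
      intro l
      induction l with
      | zero => intro _; rw [hZ0 ω, hZ0 ω']
      | succ l ih =>
        intro hl
        rw [hZs l ω, hZs l ω']
        exact congrArg₂ (· * ·) (ih (by omega)) (hagr l (by omega))
    have htau' : Tau N K Z (j+1) ω' n := tau_congr (j+1) hZagr htau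
    refine ⟨htau', (hZagr n le_rfl) ▸ hz, ?_⟩
    intro i hi k htk' hsucc'
    obtain ⟨k0, hk0, hk0K⟩ := tau_prev_succ j htau' hi
    have hkk0 : k = k0 := tau_unique i htk' hk0
    subst hkk0
    have hkn : k + K ≤ n := hk0K
    have htk : Tau N K Z i ω k :=
      tau_congr i (fun l hl => (hZagr l (by omega)).symm) htk'
    have hzN : Z k ω ∈ N := tau_mem i htk
    have hlen : (word (Z k ω)).length + 1 ≤ K := hK _ hzN
    have hZkeq : Z k ω = Z k ω' := hZagr k (by omega)
    refine hgood i hi k htk ?_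
    intro i2 hi2
    have hi2' := hi2
    rw [hZkeq] at hi2 ⊢
    rw [hagr (k + i2) (by omega)]
    exact hsucc' i2 hi2
  -- the key step
  have hlt1 : (1 : ℝ≥0∞) - p < 1 := ENNReal.sub_lt_self ENNReal.one_ne_top one_ne_zero hp0
  have hstep : ∀ j, (ℙ : Measure Ω) (C (j+1)) ≤ (1 - p) * (ℙ : Measure Ω) (C j) := by
    intro j
    -- decomposition of C (j+1)
    have hdecomp : C (j+1) = ⋃ q : ℕ × Γ,
        (Dst j q.1 q.2 ∩ {ω | Succ X q.1 (word q.2) ω}ᶜ) := by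
      ext ω
      simp only [hC, hDst, Set.mem_setOf_eq, Set.mem_iUnion, Set.mem_inter_iff,
        Set.mem_compl_iff, Prod.exists]
      constructor
      · rintro ⟨⟨n, htau⟩, hgood⟩
        refine ⟨n, Z n ω, ⟨htau, rfl, fun i hi => hgood i (by omega)⟩,
          hgood (j+1) le_rfl n htau⟩
      · rintro ⟨n, z, ⟨htau, hz, hgood⟩, hnsucc⟩
        refine ⟨⟨n, htau⟩, ?_⟩
        intro i hi k htk
        rcases Nat.lt_or_ge i (j+1) with h | h
        · exact hgood i (by omega) k htk
        · have : i = j + 1 := by omega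
          subst this
          have : k = n := tau_unique (j+1) htk htau
          subst this
          rw [hz]
          exact hnsucc
    -- pairwise disjointness of the pieces
    have hdisjD : Pairwise (Function.onFun Disjoint
        (fun q : ℕ × Γ => Dst j q.1 q.2)) := by
      rintro q q' hne
      rw [Function.onFun, Set.disjoint_left]
      rintro ω ⟨htau, hz, -⟩ ⟨htau', hz', -⟩
      refine hne (Prod.ext (tau_unique (j+1) htau htau') ?_)
      rw [← hz, ← hz', tau_unique (j+1) htau htau']
    have hdisj : Pairwise (Function.onFun Disjoint
        (fun q : ℕ × Γ => Dst j q.1 q.2 ∩ {ω | Succ X q.1 (word q.2) ω}ᶜ)) := by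
      intro q q' hne
      exact Disjoint.mono Set.inter_subset_left Set.inter_subset_left (hdisjD hne)
    -- per-piece bound
    have hpiece : ∀ q : ℕ × Γ, (ℙ : Measure Ω) (Dst j q.1 q.2 ∩ {ω | Succ X q.1 (word q.2) ω}ᶜ) ≤
        (1 - p) * (ℙ : Measure Ω) (Dst j q.1 q.2) := by
      rintro ⟨n, z⟩
      dsimp only
      by_cases hne : (Dst j n z).Nonempty
      · obtain ⟨ω₀, hω₀⟩ := hne
        have hzN : z ∈ N := by
          have := tau_mem (j+1) hω₀.1
          rwa [hω₀.2.1] at this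
        have hSeq : {ω | Succ X n (word z) ω} =
            (fun ω (i : Fin (word z).length) => X (n + ↑i) ω) ⁻¹'
              {v : Fin (word z).length → Γ | ∀ i : Fin (word z).length, v i = (word z).getD ↑i 1} := by
          ext ω
          simp only [Set.mem_setOf_eq, Set.mem_preimage, Succ]
          constructor
          · intro h i; exact h i i.isLt
          · intro h i hi; exact h ⟨i, hi⟩
        have hSceq : {ω | Succ X n (word z) ω}ᶜ =
            (fun ω (i : Fin (word z).length) => X (n + ↑i) ω) ⁻¹'
              {v : Fin (word z).length → Γ | ∀ i : Fin (word z).length, v i = (word z).getD ↑i 1}ᶜ := by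
          rw [hSeq, Set.preimage_compl]
        rw [hSceq, indep_past hmeas hindep n (word z).length _ (hDinv j n z) _]
        rw [← hSceq]
        rw [prob_compl_eq_one_sub (succ_measSet hmeas n (word z))]
        rw [succ_prob hmeas hindep hlaw n (word z)]
        rw [mul_comm]
        gcongr
        exact hple z hzN
      · rw [Set.not_nonempty_iff_eq_empty] at hne
        rw [hne]
        simp
    -- put it together
    calc (ℙ : Measure Ω) (C (j+1))
        = ∑' q : ℕ × Γ, (ℙ : Measure Ω) (Dst j q.1 q.2 ∩ {ω | Succ X q.1 (word q.2) ω}ᶜ) := by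
          rw [hdecomp, measure_iUnion hdisj
            (fun q => (hDmeas j q.1 q.2).inter (succ_measSet hmeas q.1 (word q.2)).compl)]
      _ ≤ ∑' q : ℕ × Γ, (1 - p) * (ℙ : Measure Ω) (Dst j q.1 q.2) := ENNReal.tsum_le_tsum hpiece
      _ = (1 - p) * ∑' q : ℕ × Γ, (ℙ : Measure Ω) (Dst j q.1 q.2) := ENNReal.tsum_mul_left
      _ = (1 - p) * (ℙ : Measure Ω) (⋃ q : ℕ × Γ, Dst j q.1 q.2) := by
          rw [measure_iUnion hdisjD (fun q => hDmeas j q.1 q.2)]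
      _ ≤ (1 - p) * (ℙ : Measure Ω) (C j) := by
          gcongr
          intro ω hω
          rw [Set.mem_iUnion] at hω
          obtain ⟨q, htau, hz, hgood⟩ := hω
          simp only [Tau] at htau
          obtain ⟨m, hm, -⟩ := htau
          exact ⟨⟨m, hm⟩, hgood⟩
  -- iterate
  have hiter : ∀ j, (ℙ : Measure Ω) (C j) ≤ (1 - p) ^ j := by
    intro j
    induction j with
    | zero => simpa using prob_le_one
    | succ j ih =>
      calc (ℙ : Measure Ω) (C (j+1)) ≤ (1 - p) * (ℙ : Measure Ω) (C j) := hstep j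
        _ ≤ (1 - p) * (1 - p) ^ j := by gcongr
        _ = (1 - p) ^ (j+1) := by rw [pow_succ, mul_comm]
  have hbound : ∀ j, (ℙ : Measure Ω) ({ω | ∀ n, Z n ω ∈ A} ∩ {ω | ∃ᶠ n in atTop, Z n ω ∈ N}) ≤
      (1 - p) ^ j := fun j => le_trans (measure_mono (h_subset j)) (hiter j)
  have htend : Tendsto (fun j : ℕ => ((1 : ℝ≥0∞) - p) ^ j) atTop (nhds 0) :=
    ENNReal.tendsto_pow_atTop_nhds_zero_of_lt_one hlt1
  exact le_zero_iff.mp (ge_of_tendsto' htend hbound)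

end

/-- Every element of a group generated (as semigroup) by a countable set is a product of a list
from the set. -/
lemma exists_list_of_gen {Γ : Type*} [Group Γ] {S : Set Γ}
    (hgen : Subsemigroup.closure S = ⊤) (f : Γ) :
    ∃ l : List Γ, (∀ g ∈ l, g ∈ S) ∧ l.prod = f := by
  have hmem : f ∈ Subsemigroup.closure S := by rw [hgen]; trivial
  let P : Subsemigroup Γ :=
    { carrier := {z | ∃ l : List Γ, (∀ g ∈ l, g ∈ S) ∧ l.prod = z}
      mul_mem' := by
        rintro a b ⟨l, hl, rfl⟩ ⟨l', hl', rfl⟩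
        exact ⟨l ++ l', fun g hg => by
          rcases List.mem_append.mp hg with h | h
          exacts [hl g h, hl' g h], by rw [List.prod_append]⟩ }
  have hle : Subsemigroup.closure S ≤ P :=
    Subsemigroup.closure_le.mpr fun g hg => ⟨[g], by simpa using hg⟩
  exact hle hmem

lemma countable_of_gen {Γ : Type*} [Group Γ] {S : Set Γ} (hS : S.Countable)
    (hgen : Subsemigroup.closure S = ⊤) : Countable Γ := by
  have := hS.to_subtype
  have hsurj : Function.Surjective (fun l : List S => (l.map (Subtype.val)).prod) := by
    intro f
    obtain ⟨l, hl, hprod⟩ := exists_list_of_gen hgen f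
    refine ⟨l.attach.map (fun g => (⟨g.1, hl g.1 g.2⟩ : S)), ?_⟩
    simpa using hprod
  exact Function.Surjective.countable hsurj

end Stmt19Aux

open Stmt19Aux

/-- If the walk has positive probability to stay in `A` forever, and conditioned on
staying it visits each group element only finitely often (transience of the
conditioned walk), then conditioned on staying in `A` forever the distance from the
walk to `Aᶜ` tends to infinity almost surely. -/
theorem stmt19 {Ω Γ : Type*} [MeasureSpace Ω] [IsProbabilityMeasure (ℙ : Measure Ω)]
    [Group Γ] [MeasurableSpace Γ] [MeasurableSingletonClass Γ]
    (d : Γ → Γ → ℝ) (hd0 : ∀ a b, 0 ≤ d a b)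
    (hleft : ∀ g a b : Γ, d (g * a) (g * b) = d a b)
    (hballs : ∀ (z : Γ) (r : ℝ), {w | d z w ≤ r}.Finite)
    (μ : Measure Γ) [IsProbabilityMeasure μ]
    (hgen : Subsemigroup.closure {g : Γ | μ {g} ≠ 0} = ⊤)
    (X : ℕ → Ω → Γ) (hmeas : ∀ i, Measurable (X i))
    (hindep : iIndepFun X ℙ)
    (hlaw : ∀ i, Measure.map (X i) (ℙ : Measure Ω) = μ)
    (x : Γ) (Z : ℕ → Ω → Γ) (hZ0 : ∀ ω, Z 0 ω = x)
    (hZs : ∀ n ω, Z (n + 1) ω = Z n ω * X n ω)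
    (A : Set Γ)
    (stay : Set Ω) (hstay : stay = {ω | ∀ n : ℕ, Z n ω ∈ A})
    (hpos : 0 < (ℙ : Measure Ω) stay
)
    (htrans : ∀ᵐ ω ∂((ℙ : Measure Ω)[|stay]), ∀ g : Γ, {n : ℕ | Z n ω = g}.Finite) :
    ∀ᵐ ω ∂((ℙ : Measure Ω)[|stay]),
      Tendsto (fun n : ℕ => ⨅ w ∈ Aᶜ, ENNReal.ofReal (d (Z n ω) w)) atTop (nhds ⊤) := by
  classical
  -- `Γ` is countable
  have hScount : ({g : Γ | μ {g} ≠ 0}).Countable := by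
    have h := Measure.countable_meas_level_set_pos (μ := μ) (measurable_id (α := Γ))
    refine h.mono ?_
    intro g hg
    simp only [Set.mem_setOf_eq, ne_eq] at hg ⊢
    have heq : {a : Γ | id a = g} = {g} := by ext a; simp
    rw [heq]
    exact pos_iff_ne_zero.mpr hg
  have : Countable Γ := countable_of_gen hScount hgen
  -- choice of words spelling each group element
  have hwordex : ∀ f : Γ, ∃ l : List Γ, (∀ g ∈ l, μ {g} ≠ 0) ∧ l.prod = f :=
    fun f => exists_list_of_gen hgen f
  choose L hLmem hLprod using hwordex
  have hZm : ∀ n, Measurable (Z n) := z_meas hmeas hZ0 hZs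
  have hstaymeas : MeasurableSet stay := by
    rw [hstay]
    have heq : {ω | ∀ n : ℕ, Z n ω ∈ A} = ⋂ n, Z n ⁻¹' A := by
      ext ω; simp [Set.mem_iInter]
    rw [heq]
    exact MeasurableSet.iInter fun n => (hZm n) (measAll A)
  -- the crucial zero-measure fact at each distance level
  have hkey : ∀ m : ℕ, (ℙ : Measure Ω) (stay ∩
      {ω | ∃ᶠ n in atTop, Z n ω ∈ {z : Γ | ∃ w, w ∉ A ∧ d z w ≤ (m : ℝ) + 1}}) = 0 := by
    intro m
    set r : ℝ := (m : ℝ) + 1 with hrdef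
    set N : Set Γ := {z : Γ | ∃ w, w ∉ A ∧ d z w ≤ r} with hNdef
    have hfchex : ∀ z ∈ N, ∃ g : Γ, z * g ∉ A ∧ d 1 g ≤ r := by
      intro z hz
      obtain ⟨w, hw1, hw2⟩ := hz
      refine ⟨z⁻¹ * w, ?_, ?_⟩
      · have hzz : z * (z⁻¹ * w) = w := by group
        rw [hzz]; exact hw1
      · have h3 := hleft z⁻¹ z w
        rw [inv_mul_cancel] at h3
        rw [h3]; exact hw2
    set fch : Γ → Γ := fun z => if h : z ∈ N then Classical.choose (hfchex z h) else 1
      with hfchdef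
    have hfch1 : ∀ z (hz : z ∈ N), z * fch z ∉ A ∧ d 1 (fch z) ≤ r := by
      intro z hz
      rw [hfchdef]
      simp only [dif_pos hz]
      exact Classical.choose_spec (hfchex z hz)
    have hF : ({g : Γ | d 1 g ≤ r}).Finite := hballs 1 r
    set K : ℕ := 1 + hF.toFinset.sup (fun g => (L g).length) with hKdef
    set word : Γ → List Γ := fun z => L (fch z) with hworddef
    have hfchF : ∀ z ∈ N, fch z ∈ hF.toFinset := fun z hz =>
      hF.mem_toFinset.mpr ((hfch1 z hz).2)
    have hKlen : ∀ z ∈ N, (word z).length + 1 ≤ K := by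
      intro z hz
      have h4 : (L (fch z)).length ≤ hF.toFinset.sup (fun g => (L g).length) :=
        Finset.le_sup (f := fun g => (L g).length) (hfchF z hz)
      rw [hworddef, hKdef]
      show (L (fch z)).length + 1 ≤ 1 + hF.toFinset.sup (fun g => (L g).length)
      omega
    set p : ℝ≥0∞ := hF.toFinset.inf (fun g => pL μ (L g)) with hpdef
    have hppos : p ≠ 0 := by
      rw [hpdef, ← pos_iff_ne_zero,
        Finset.lt_inf_iff (show (0 : ℝ≥0∞) < ⊤ by simp)]
      intro g _
      rw [pos_iff_ne_zero]
      unfold pL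
      rw [Finset.prod_ne_zero_iff]
      intro i hi
      have hilen : i < (L g).length := Finset.mem_range.mp hi
      have hmem : (L g).getD i 1 ∈ L g := by
        rw [List.getD_eq_getElem (l := L g) (d := 1) hilen]; exact List.getElem_mem _
      exact hLmem g _ hmem
    have hple : ∀ z ∈ N, p ≤ pL μ (word z) := by
      intro z hz
      rw [hpdef, hworddef]
      exact Finset.inf_le (hfchF z hz)
    have hexit : ∀ z ∈ N, z * (word z).prod ∉ A := by
      intro z hz
      rw [hworddef]
      simp only
      rw [hLprod (fch z)]
      exact (hfch1 z hz).1
    have h0 := key (N := N) (K := K) hmeas hindep hlaw hZ0 hZs A word hexit hKlen p hppos hple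
    rw [hstay]
    exact h0
  -- conditional measure of the bad sets is zero
  have hcond : ∀ m : ℕ, (ℙ : Measure Ω)[|stay]
      {ω | ∃ᶠ n in atTop, Z n ω ∈ {z : Γ | ∃ w, w ∉ A ∧ d z w ≤ (m : ℝ) + 1}} = 0 := by
    intro m
    rw [cond_apply hstaymeas, hkey m, mul_zero]
  have hae : ∀ᵐ ω ∂((ℙ : Measure Ω)[|stay]), ∀ m : ℕ,
      ¬ ∃ᶠ n in atTop, Z n ω ∈ {z : Γ | ∃ w, w ∉ A ∧ d z w ≤ (m : ℝ) + 1} := by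
    rw [ae_all_iff]
    intro m
    have h5 := measure_eq_zero_iff_ae_notMem.mp (hcond m)
    filter_upwards [h5] with ω hω
    exact hω
  filter_upwards [hae] with ω hω
  rw [ENNReal.tendsto_nhds_top_iff_nat]
  intro m
  have hev := not_frequently.mp (hω m)
  filter_upwards [hev] with n hn
  have hn' : ∀ w, w ∉ A → (m : ℝ) + 1 < d (Z n ω) w := by
    intro w hw
    by_contra hcon
    push_neg at hcon
    exact hn ⟨w, hw, hcon⟩
  have hlow : ENNReal.ofReal ((m : ℝ) + 1) ≤ ⨅ w ∈ Aᶜ, ENNReal.ofReal (d (Z n ω) w) := by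
    refine le_iInf₂ fun w hw => ?_
    exact ENNReal.ofReal_le_ofReal (le_of_lt (hn' w hw))
  refine lt_of_lt_of_le ?_ hlow
  rw [show ((m : ℝ) + 1) = ((m + 1 : ℕ) : ℝ) by push_cast; ring, ENNReal.ofReal_natCast]
  exact_mod_cast Nat.lt_succ_self m
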